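/- arXiv:2501.15205 — 4 statements merged into one kernel-verified Lean document; each statement's English description precedes it below -/
import Mathlib

section
/- Let m be a positive natural number. Let Q be an invertible skew-symmetric real (2m)×(2m) matrix and let S be an invertible real (2m)×(2m) matrix with Sᵀ · Q · S = J. Let R be an invertible complex m×m matrix, let Z be a symmetric complex m×m matrix, and set T := R · (I_m | Z) · S⁻¹, a complex m×(2m) matrix, where (I_m | Z) is the m×(2m) matrix whose first m columns form the identity matrix and whose last m columns form Z, and where S and Q are regarded as complex matrices by coercing their entries. Then i · conj(T) · Q⁻¹ · Tᵀ = 2 · conj(R) · (Im Z) · Rᵀ. -/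
open Matrix

/-- Map of a nonsingular inverse under a ring hom, given the matrix is a unit. -/
lemma map_inv_of_isUnit {n : Type*} [Fintype n] [DecidableEq n]
    {α β : Type*} [CommRing α] [CommRing β] (f : α →+* β)
    (A : Matrix n n α) (hA : IsUnit A) :
    (A⁻¹).map f = (A.map f)⁻¹ := by
  symm
  apply Matrix.inv_eq_right_inv
  have h1 : A * A⁻¹ = 1 := Matrix.mul_nonsing_inv A (Matrix.isUnit_iff_isUnit_det A |>.mp hA)
  calc A.map f * (A⁻¹).map f = (A * A⁻¹).map f := (Matrix.map_mul).symm
    _ = (1 : Matrix n n α).map f := by rw [h1]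
    _ = 1 := Matrix.map_one f (map_zero f) (map_one f)

/-- The identity `i · conj(T) · Q⁻¹ · Tᵀ = 2 · conj(R) · (Im Z) · Rᵀ` from item (4) of the
lemma on constant polarizations, where `T = R · (I | Z) · S⁻¹` and `Sᵀ Q S = J`. -/
theorem conj_T_Qinv_Tt_eq_two_conj_R_ImZ_Rt
    (m : ℕ) (hm : 0 < m)
    (Q S : Matrix (Fin m ⊕ Fin m) (Fin m ⊕ Fin m) ℝ)
    (hQskew : Qᵀ = -Q) (hQ : IsUnit Q) (hS : IsUnit S)
    (hSQS : Sᵀ * Q * S = Matrix.fromBlocks 0 1 (-1) 0)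
    (R Z : Matrix (Fin m) (Fin m) ℂ)
    (hR : IsUnit R) (hZ : Zᵀ = Z)
    (Qc Sc : Matrix (Fin m ⊕ Fin m) (Fin m ⊕ Fin m) ℂ)
    (hQc : Qc = Q.map (fun x : ℝ => (x : ℂ)))
    (hSc : Sc = S.map (fun x : ℝ => (x : ℂ)))
    (T : Matrix (Fin m) (Fin m ⊕ Fin m) ℂ)
    (hT : T = R * Matrix.fromCols 1 Z * Sc⁻¹) :
    Complex.I • (T.map (starRingEnd ℂ) * Qc⁻¹ * Tᵀ)
      = (2 : ℂ) • (R.map (starRingEnd ℂ) * Z.map (fun z => (z.im : ℂ)) * Rᵀ) := by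
  have hT2 : T = R * Matrix.fromCols (1 : Matrix (Fin m) (Fin m) ℂ) Z * Sc⁻¹ := by rw [hT]; rfl
  set f : ℝ →+* ℂ := Complex.ofRealHom
  have hQc' : Qc = Q.map f := by rw [hQc]; rfl
  have hSc' : Sc = S.map f := by rw [hSc]; rfl
  -- units
  have hQcU : IsUnit Qc := by
    rw [hQc']
    have := hQ.map (f.mapMatrix)
    simpa using this
  have hScU : IsUnit Sc := by
    rw [hSc']
    have := hS.map (f.mapMatrix)
    simpa using this
  have hQcdet : IsUnit Qc.det := (Matrix.isUnit_iff_isUnit_det Qc).mp hQcU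
  have hScdet : IsUnit Sc.det := (Matrix.isUnit_iff_isUnit_det Sc).mp hScU
  -- complexified symplectic relation
  have hSQSc : Scᵀ * Qc * Sc = Matrix.fromBlocks 0 1 (-1) 0 := by
    rw [hQc', hSc', ← Matrix.transpose_map, ← Matrix.map_mul, ← Matrix.map_mul, hSQS]
    ext (i | i) (j | j) <;>
      simp [Matrix.fromBlocks, Matrix.map_apply, Matrix.one_apply, f, apply_ite]
  -- middle identity : Sc⁻¹ * Qc⁻¹ * (Sc⁻¹)ᵀ = J⁻¹ = fromBlocks 0 (-1) 1 0
  have hJinv : (Matrix.fromBlocks 0 1 (-1) 0 : Matrix (Fin m ⊕ Fin m) (Fin m ⊕ Fin m) ℂ)⁻¹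
      = Matrix.fromBlocks 0 (-1) 1 0 := by
    apply Matrix.inv_eq_right_inv
    rw [Matrix.fromBlocks_multiply]
    simp [Matrix.fromBlocks_one]
  have hmid : Sc⁻¹ * Qc⁻¹ * (Sc⁻¹)ᵀ = Matrix.fromBlocks 0 (-1) 1 0 := by
    have h1 : (Scᵀ * Qc * Sc)⁻¹ = Sc⁻¹ * Qc⁻¹ * (Scᵀ)⁻¹ := by
      rw [Matrix.mul_inv_rev, Matrix.mul_inv_rev, ← mul_assoc]
    rw [← hJinv, ← hSQSc, h1, Matrix.transpose_nonsing_inv]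
  -- conj of Sc⁻¹ is itself
  have hconjSc : (Sc⁻¹).map (starRingEnd ℂ) = Sc⁻¹ := by
    have : Sc.map (starRingEnd ℂ) = Sc := by
      rw [hSc']; ext i j; simp [Matrix.map_apply, f]
    rw [map_inv_of_isUnit (starRingEnd ℂ) Sc hScU, this]
  -- expand conj T and Tᵀ
  have hconjT : T.map (starRingEnd ℂ)
      = R.map (starRingEnd ℂ) * Matrix.fromCols (1 : Matrix (Fin m) (Fin m) ℂ) (Z.map (starRingEnd ℂ)) * Sc⁻¹ := by
    rw [hT2, Matrix.map_mul, Matrix.map_mul, hconjSc]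
    congr 1
    congr 1
    ext i (j | j) <;> simp [Matrix.fromCols, Matrix.map_apply, Matrix.one_apply, apply_ite]
  have hTt : Tᵀ = (Sc⁻¹)ᵀ * Matrix.fromRows (1 : Matrix (Fin m) (Fin m) ℂ) Z * Rᵀ := by
    rw [hT2, Matrix.transpose_mul, Matrix.transpose_mul, Matrix.transpose_fromCols,
      Matrix.transpose_one, hZ, ← Matrix.mul_assoc]
  -- main computation
  have key : T.map (starRingEnd ℂ) * Qc⁻¹ * Tᵀ
      = R.map (starRingEnd ℂ) * (Z.map (starRingEnd ℂ) - Z) * Rᵀ := by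
    have hmid2 : ∀ (X : Matrix (Fin m ⊕ Fin m) (Fin m) ℂ),
        Sc⁻¹ * (Qc⁻¹ * (Sc⁻¹ᵀ * X)) = (Matrix.fromBlocks 0 (-1) 1 0 : Matrix (Fin m ⊕ Fin m) (Fin m ⊕ Fin m) ℂ) * X := by
      intro X
      rw [← Matrix.mul_assoc, ← Matrix.mul_assoc, hmid]
    have hN : Matrix.fromCols (1 : Matrix (Fin m) (Fin m) ℂ) (Z.map (starRingEnd ℂ)) *
        (Matrix.fromBlocks 0 (-1) 1 0 :
          Matrix (Fin m ⊕ Fin m) (Fin m ⊕ Fin m) ℂ) *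
        Matrix.fromRows (1 : Matrix (Fin m) (Fin m) ℂ) Z = Z.map (starRingEnd ℂ) - Z := by
      rw [Matrix.fromCols_mul_fromBlocks, Matrix.fromCols_mul_fromRows]
      simp [sub_eq_add_neg]
    rw [hconjT, hTt]
    simp only [Matrix.mul_assoc]
    rw [hmid2]
    congr 1
    rw [← hN]
    simp only [Matrix.mul_assoc]
  rw [key]
  -- entrywise : I • (conj Z - Z) = 2 • Im Z
  have hentry : Complex.I • (Z.map (starRingEnd ℂ) - Z) = (2 : ℂ) • Z.map (fun z => (z.im : ℂ)) := by
    ext i j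
    simp only [Matrix.smul_apply, Matrix.sub_apply, Matrix.map_apply, smul_eq_mul]
    rw [Complex.ext_iff]
    constructor <;>
      simp [Complex.mul_re, Complex.mul_im, Complex.conj_re, Complex.conj_im] <;> ring
  calc Complex.I • (R.map (starRingEnd ℂ) * (Z.map (starRingEnd ℂ) - Z) * Rᵀ)
      = R.map (starRingEnd ℂ) * (Complex.I • (Z.map (starRingEnd ℂ) - Z)) * Rᵀ := by
        rw [Matrix.mul_smul, Matrix.smul_mul]
    _ = R.map (starRingEnd ℂ) * ((2:ℂ) • Z.map (fun z => (z.im : ℂ))) * Rᵀ := by rw [hentry]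
    _ = (2 : ℂ) • (R.map (starRingEnd ℂ) * Z.map (fun z => (z.im : ℂ)) * Rᵀ) := by
        rw [Matrix.mul_smul, Matrix.smul_mul]
end

section
/- Let m be a positive natural number and let Z be a symmetric complex m×m matrix whose entrywise imaginary part Im Z (a real m×m matrix) is invertible. Let Y denote the complex m×m matrix obtained from (Im Z)⁻¹ by coercing entries to ℂ. Define Π1 := −(i/2)·Y and Π2 := (i/2)·conj(Z)·Y, and let Π be the (2m)×m complex matrix obtained by stacking Π1 on top of Π2. Then Πᵀ · J · Π = 0 and Πᵀ · J · conj(Π) = −(i/2)·Y. -/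
open Matrix

/-- The identities `Πᵀ · J · Π = 0` and `Πᵀ · J · conj(Π) = −(i/2)·(Im Z)⁻¹` from the proof of
item (4) of the lemma on constant polarizations, where `Π = (Π₁; Π₂)` with
`Π₁ = −(i/2)(Im Z)⁻¹` and `Π₂ = (i/2)·conj(Z)·(Im Z)⁻¹`. -/
theorem pi_transpose_J_pi
    (m : ℕ) (hm : 0 < m)
    (Z : Matrix (Fin m) (Fin m) ℂ) (hZ : Zᵀ = Z)
    (ImZ : Matrix (Fin m) (Fin m) ℝ)
    (hImZ : ImZ = Matrix.of fun i j => (Z i j).im)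
    (hImZinv : IsUnit ImZ)
    (Y : Matrix (Fin m) (Fin m) ℂ)
    (hY : Y = (ImZ⁻¹).map (fun x : ℝ => (x : ℂ)))
    (P1 P2 : Matrix (Fin m) (Fin m) ℂ)
    (hP1 : P1 = (-(Complex.I / 2)) • Y)
    (hP2 : P2 = (Complex.I / 2) • (Z.map (starRingEnd ℂ) * Y))
    (P : Matrix (Fin m ⊕ Fin m) (Fin m) ℂ)
    (hP : P = Matrix.fromRows P1 P2)
    (J : Matrix (Fin m ⊕ Fin m) (Fin m ⊕ Fin m) ℂ)
    (hJ : J = Matrix.fromBlocks 0 1 (-1) 0) :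
    Pᵀ * J * P = 0 ∧ Pᵀ * J * P.map (starRingEnd ℂ) = (-(Complex.I / 2)) • Y := by
  have hZsymm : ∀ i j, Z j i = Z i j := fun i j => congrFun (congrFun hZ i) j
  have hImZsymm : ImZᵀ = ImZ := by
    subst hImZ; ext i j
    simp only [Matrix.transpose_apply, Matrix.of_apply]
    rw [hZsymm]
  have hYsymm : Yᵀ = Y := by
    rw [hY, ← Matrix.transpose_map, Matrix.transpose_nonsing_inv, hImZsymm]
  have hZbar : (Z.map (starRingEnd ℂ))ᵀ = Z.map (starRingEnd ℂ) := by
    rw [← Matrix.transpose_map, hZ]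
  have hYinv : Y * ImZ.map (fun x : ℝ => (x : ℂ)) = 1 := by
    have base : ImZ⁻¹ * ImZ = 1 :=
      Matrix.nonsing_inv_mul _ ((Matrix.isUnit_iff_isUnit_det ImZ).mp hImZinv)
    have h : (ImZ⁻¹).map ⇑(Complex.ofRealHom) * ImZ.map ⇑(Complex.ofRealHom) = 1 := by
      rw [← Matrix.map_mul, base, Matrix.map_one _ (map_zero _) (map_one _)]
    rw [hY]; exact h
  have hZdiff : Z - Z.map (starRingEnd ℂ) = (2 * Complex.I) • ImZ.map (fun x : ℝ => (x : ℂ)) := by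
    subst hImZ
    ext i j
    simp only [Matrix.sub_apply, Matrix.smul_apply, Matrix.map_apply, Matrix.of_apply,
      smul_eq_mul]
    rw [Complex.sub_conj]
    push_cast
    ring
  have key : ∀ Q : Matrix (Fin m ⊕ Fin m) (Fin m) ℂ, ∀ Q1 Q2,
      Q = Matrix.fromRows Q1 Q2 → Pᵀ * J * Q = P1ᵀ * Q2 - P2ᵀ * Q1 := by
    intro Q Q1 Q2 hQ
    rw [hP, hQ, hJ, Matrix.transpose_fromRows, Matrix.fromCols_mul_fromBlocks,
      Matrix.fromCols_mul_fromRows]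
    simp only [Matrix.mul_zero, Matrix.mul_one, Matrix.mul_neg, Matrix.neg_mul,
      zero_add, add_zero]
    rw [sub_eq_add_neg, add_comm]
  constructor
  · rw [key P P1 P2 hP, hP1, hP2]
    rw [sub_eq_zero]
    rw [Matrix.transpose_smul, Matrix.transpose_smul]
    simp only [Matrix.transpose_mul, hYsymm, hZbar]
    rw [Matrix.smul_mul, Matrix.mul_smul, Matrix.smul_mul, Matrix.mul_smul, smul_smul, smul_smul]
    rw [mul_assoc, mul_comm]
  · have hPmap : P.map (starRingEnd ℂ) =
        Matrix.fromRows (P1.map (starRingEnd ℂ)) (P2.map (starRingEnd ℂ)) := by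
      rw [hP]; ext (i | i) j <;> simp
    rw [key _ _ _ hPmap]
    have h1 : P1.map (starRingEnd ℂ) = (Complex.I / 2) • Y := by
      rw [hP1, hY]; ext i j
      simp [Matrix.map_apply, Matrix.smul_apply, _root_.map_mul, map_div₀, map_ofNat, Complex.conj_I, Complex.conj_ofReal]
      ring
    have h2 : P2.map (starRingEnd ℂ) = (-(Complex.I / 2)) • (Z * Y) := by
      rw [hP2, hY]; ext i j
      simp [Matrix.map_apply, Matrix.smul_apply, Matrix.mul_apply, map_sum, _root_.map_mul,
        map_div₀, map_ofNat, Complex.conj_I, Complex.conj_ofReal, Finset.mul_sum]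
      rw [← Finset.sum_neg_distrib]
      exact Finset.sum_congr rfl fun k _ => by ring
    rw [h1, h2, hP1, hP2]
    rw [Matrix.transpose_smul, Matrix.transpose_smul]
    simp only [Matrix.transpose_mul, hYsymm, hZbar]
    rw [Matrix.smul_mul, Matrix.mul_smul, Matrix.smul_mul, Matrix.mul_smul, smul_smul, smul_smul]
    have hI : -(Complex.I / 2) * -(Complex.I / 2) = -(1/4 : ℂ) := by
      ring_nf; rw [Complex.I_sq]; ring
    have hI2 : Complex.I / 2 * (Complex.I / 2) = -(1/4 : ℂ) := by
      ring_nf; rw [Complex.I_sq]; ring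
    rw [hI, hI2]
    simp only [← Matrix.mul_assoc]
    rw [← smul_sub, ← Matrix.sub_mul, ← Matrix.mul_sub, hZdiff, Matrix.mul_smul,
      Matrix.smul_mul, smul_smul, hYinv, Matrix.one_mul]
    congr 1
    ring
end

section
/- Let ζ := exp(2πi/3) and let σ be the ℂ-algebra automorphism of the polynomial ring ℂ[s, w1, w2] in three variables determined by σ(s) = ζ²·s, σ(w1) = ζ·w1, σ(w2) = ζ·w2. Then the invariant subalgebra { f ∈ ℂ[s,w1,w2] : σ(f) = f } equals the ℂ-subalgebra of ℂ[s,w1,w2] generated by the seven elements s³, w1³, w2³, s·w1, s·w2, w1²·w2, w1·w2². -/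
open MvPolynomial

private lemma pow_split {R : Type*} [CommRing R] (x : R) (k a : ℕ) (h : k ≤ a) :
    x ^ a = x ^ k * x ^ (a - k) := by
  rw [← pow_add]; congr 1; omega

private lemma key_mem (A : Subalgebra ℂ (MvPolynomial (Fin 3) ℂ))
    (h1 : X 0 ^ 3 ∈ A) (h2 : X 1 ^ 3 ∈ A) (h3 : X 2 ^ 3 ∈ A)
    (h4 : X 0 * X 1 ∈ A) (h5 : X 0 * X 2 ∈ A)
    (h6 : X 1 ^ 2 * X 2 ∈ A) (h7 : X 1 * X 2 ^ 2 ∈ A) :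
    ∀ n a b c : ℕ, a + b + c ≤ n → 3 ∣ 2 * a + b + c →
      X 0 ^ a * X 1 ^ b * X 2 ^ c ∈ A := by
  intro n
  induction n with
  | zero =>
    intro a b c hle _
    obtain ⟨rfl, rfl, rfl⟩ : a = 0 ∧ b = 0 ∧ c = 0 := by omega
    simpa using A.one_mem
  | succ n ih =>
    intro a b c hle hdvd
    by_cases ha3 : 3 ≤ a
    · have heq : (X 0 ^ a * X 1 ^ b * X 2 ^ c : MvPolynomial (Fin 3) ℂ)
          = X 0 ^ 3 * (X 0 ^ (a - 3) * X 1 ^ b * X 2 ^ c) := by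
        rw [pow_split (X 0 : MvPolynomial (Fin 3) ℂ) 3 a ha3]; ring
      rw [heq]
      exact A.mul_mem h1 (ih (a - 3) b c (by omega) (by omega))
    by_cases hb3 : 3 ≤ b
    · have heq : (X 0 ^ a * X 1 ^ b * X 2 ^ c : MvPolynomial (Fin 3) ℂ)
          = X 1 ^ 3 * (X 0 ^ a * X 1 ^ (b - 3) * X 2 ^ c) := by
        rw [pow_split (X 1 : MvPolynomial (Fin 3) ℂ) 3 b hb3]; ring
      rw [heq]
      exact A.mul_mem h2 (ih a (b - 3) c (by omega) (by omega))
    by_cases hc3 : 3 ≤ c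
    · have heq : (X 0 ^ a * X 1 ^ b * X 2 ^ c : MvPolynomial (Fin 3) ℂ)
          = X 2 ^ 3 * (X 0 ^ a * X 1 ^ b * X 2 ^ (c - 3)) := by
        rw [pow_split (X 2 : MvPolynomial (Fin 3) ℂ) 3 c hc3]; ring
      rw [heq]
      exact A.mul_mem h3 (ih a b (c - 3) (by omega) (by omega))
    by_cases hab : 1 ≤ a ∧ 1 ≤ b
    · have heq : (X 0 ^ a * X 1 ^ b * X 2 ^ c : MvPolynomial (Fin 3) ℂ)
          = (X 0 * X 1) * (X 0 ^ (a - 1) * X 1 ^ (b - 1) * X 2 ^ c) := by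
        rw [pow_split (X 0 : MvPolynomial (Fin 3) ℂ) 1 a hab.1, pow_split (X 1 : MvPolynomial (Fin 3) ℂ) 1 b hab.2]; ring
      rw [heq]
      exact A.mul_mem h4 (ih (a - 1) (b - 1) c (by omega) (by omega))
    by_cases hac : 1 ≤ a ∧ 1 ≤ c
    · have heq : (X 0 ^ a * X 1 ^ b * X 2 ^ c : MvPolynomial (Fin 3) ℂ)
          = (X 0 * X 2) * (X 0 ^ (a - 1) * X 1 ^ b * X 2 ^ (c - 1)) := by
        rw [pow_split (X 0 : MvPolynomial (Fin 3) ℂ) 1 a hac.1, pow_split (X 2 : MvPolynomial (Fin 3) ℂ) 1 c hac.2]; ring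
      rw [heq]
      exact A.mul_mem h5 (ih (a - 1) b (c - 1) (by omega) (by omega))
    · have ha : a = 0 := by omega
      subst ha
      have hbc : (b = 0 ∧ c = 0) ∨ (b = 1 ∧ c = 2) ∨ (b = 2 ∧ c = 1) := by omega
      rcases hbc with ⟨rfl, rfl⟩ | ⟨rfl, rfl⟩ | ⟨rfl, rfl⟩
      · simpa using A.one_mem
      · simpa using h7
      · simpa using h6

/-- The invariant ring `ℂ[s,w1,w2]^{ℤ3}` for the action by scaling with weights `(2,1,1)`
(with `ζ = exp(2πi/3)`) is generated by `s³, w1³, w2³, s·w1, s·w2, w1²·w2, w1·w2²`.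
Here the variables `s, w1, w2` are `X 0, X 1, X 2` in `MvPolynomial (Fin 3) ℂ`. -/
theorem invariant_ring_Z3_weights_211
    (ζ : ℂ) (hζ : ζ = Complex.exp (2 * (Real.pi : ℂ) * Complex.I / 3))
    (σ : MvPolynomial (Fin 3) ℂ ≃ₐ[ℂ] MvPolynomial (Fin 3) ℂ)
    (hs : σ (X 0) = C (ζ ^ 2) * X 0)
    (hw1 : σ (X 1) = C ζ * X 1)
    (hw2 : σ (X 2) = C ζ * X 2) :
    {f : MvPolynomial (Fin 3) ℂ | σ f = f}
      = ↑(Algebra.adjoin ℂ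
          ({X 0 ^ 3, X 1 ^ 3, X 2 ^ 3, X 0 * X 1, X 0 * X 2,
            X 1 ^ 2 * X 2, X 1 * X 2 ^ 2} : Set (MvPolynomial (Fin 3) ℂ))) := by
  have hprim : IsPrimitiveRoot ζ 3 := by
    rw [hζ]
    have h := Complex.isPrimitiveRoot_exp 3 (by norm_num)
    norm_num at h
    exact h
  have hz3 : ζ ^ 3 = 1 := hprim.pow_eq_one
  set A := Algebra.adjoin ℂ
      ({X 0 ^ 3, X 1 ^ 3, X 2 ^ 3, X 0 * X 1, X 0 * X 2,
        X 1 ^ 2 * X 2, X 1 * X 2 ^ 2} : Set (MvPolynomial (Fin 3) ℂ)) with hA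
  -- generator memberships
  have g1 : X 0 ^ 3 ∈ A := Algebra.subset_adjoin (by
    simp only [Set.mem_insert_iff, Set.mem_singleton_iff]; exact Or.inl trivial)
  have g2 : X 1 ^ 3 ∈ A := Algebra.subset_adjoin (by
    simp only [Set.mem_insert_iff, Set.mem_singleton_iff]; exact Or.inr (Or.inl trivial))
  have g3 : X 2 ^ 3 ∈ A := Algebra.subset_adjoin (by
    simp only [Set.mem_insert_iff, Set.mem_singleton_iff]; exact Or.inr (Or.inr (Or.inl trivial)))
  have g4 : X 0 * X 1 ∈ A := Algebra.subset_adjoin (by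
    simp only [Set.mem_insert_iff, Set.mem_singleton_iff]; exact Or.inr (Or.inr (Or.inr (Or.inl trivial))))
  have g5 : X 0 * X 2 ∈ A := Algebra.subset_adjoin (by
    simp only [Set.mem_insert_iff, Set.mem_singleton_iff]; exact Or.inr (Or.inr (Or.inr (Or.inr (Or.inl trivial)))))
  have g6 : X 1 ^ 2 * X 2 ∈ A := Algebra.subset_adjoin (by
    simp only [Set.mem_insert_iff, Set.mem_singleton_iff]; exact Or.inr (Or.inr (Or.inr (Or.inr (Or.inr (Or.inl trivial))))))
  have g7 : X 1 * X 2 ^ 2 ∈ A := Algebra.subset_adjoin (by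
    simp only [Set.mem_insert_iff, Set.mem_singleton_iff]; exact Or.inr (Or.inr (Or.inr (Or.inr (Or.inr (Or.inr trivial))))))
  -- monomial expansion
  have hmon : ∀ (d : Fin 3 →₀ ℕ) (c : ℂ),
      (monomial d c : MvPolynomial (Fin 3) ℂ)
        = C c * (X 0 ^ d 0 * X 1 ^ d 1 * X 2 ^ d 2) := by
    intro d c
    rw [monomial_eq, Finsupp.prod_fintype _ _ (fun i => pow_zero _), Fin.prod_univ_three]
  -- action of σ on monomials
  have hσmon : ∀ (d : Fin 3 →₀ ℕ) (c : ℂ),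
      σ (monomial d c) = C (ζ ^ (2 * d 0 + d 1 + d 2)) * monomial d c := by
    intro d c
    rw [hmon d c]
    have hCc : σ (C c) = C c := by
      have h0 : (C c : MvPolynomial (Fin 3) ℂ) = algebraMap ℂ _ c := rfl
      rw [h0, AlgEquiv.commutes]
    rw [map_mul, map_mul, map_mul, map_pow, map_pow, map_pow, hs, hw1, hw2, hCc,
      mul_pow, mul_pow, mul_pow, ← C_pow, ← C_pow, ← C_pow, ← pow_mul]
    rw [show ζ ^ (2 * d 0 + d 1 + d 2) = ζ ^ (2 * d 0) * ζ ^ d 1 * ζ ^ d 2 by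
      rw [← pow_add, ← pow_add]]
    rw [C_mul, C_mul]
    ring
  ext f
  simp only [Set.mem_setOf_eq, SetLike.mem_coe]
  constructor
  · intro hf
    have hcoeff : ∀ d : Fin 3 →₀ ℕ,
        coeff d (σ f) = ζ ^ (2 * d 0 + d 1 + d 2) * coeff d f := by
      intro d
      conv_lhs => rw [f.as_sum, map_sum]
      simp only [hσmon, coeff_sum, coeff_C_mul, coeff_monomial, mul_ite, mul_zero]
      rw [Finset.sum_ite_eq' f.support d]
      split
      · rfl
      · next h => rw [notMem_support_iff.mp h, mul_zero]
    rw [f.as_sum]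
    apply Subalgebra.sum_mem
    intro d hd
    have hc : coeff d f ≠ 0 := mem_support_iff.mp hd
    have h1 := hcoeff d
    rw [hf] at h1
    have hz : ζ ^ (2 * d 0 + d 1 + d 2) = 1 :=
      mul_right_cancel₀ hc (by rw [← h1, one_mul])
    have hdvd : 3 ∣ 2 * d 0 + d 1 + d 2 := (hprim.pow_eq_one_iff_dvd _).mp hz
    rw [hmon]
    refine A.mul_mem ?_
      (key_mem A g1 g2 g3 g4 g5 g6 g7 (d 0 + d 1 + d 2) (d 0) (d 1) (d 2) le_rfl hdvd)
    rw [← MvPolynomial.algebraMap_eq]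
    exact A.algebraMap_mem _
  · intro hfA
    have hC1 : ∀ p : MvPolynomial (Fin 3) ℂ, C (ζ ^ 3) * p = p := fun p => by
      rw [hz3, C_1, one_mul]
    have hgen : A ≤ AlgHom.equalizer σ.toAlgHom (AlgHom.id ℂ _) := by
      rw [hA]
      apply Algebra.adjoin_le
      intro x hx
      simp only [Set.mem_insert_iff, Set.mem_singleton_iff] at hx
      have hmem : σ x = x → x ∈ AlgHom.equalizer σ.toAlgHom (AlgHom.id ℂ _) := by
        intro h
        rw [AlgHom.mem_equalizer]
        simpa using h
      apply hmem
      rcases hx with rfl | rfl | rfl | rfl | rfl | rfl | rfl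
      · rw [map_pow, hs, mul_pow, ← C_pow, ← pow_mul]
        rw [show (2 * 3 : ℕ) = 3 * 2 from rfl, pow_mul, hz3, one_pow, C_1, one_mul]
      · rw [map_pow, hw1, mul_pow, ← C_pow, hC1]
      · rw [map_pow, hw2, mul_pow, ← C_pow, hC1]
      · rw [map_mul, hs, hw1, mul_mul_mul_comm, ← C_mul,
          show ζ ^ 2 * ζ = ζ ^ 3 from by ring, hC1]
      · rw [map_mul, hs, hw2, mul_mul_mul_comm, ← C_mul,
          show ζ ^ 2 * ζ = ζ ^ 3 from by ring, hC1]
      · rw [map_mul, map_pow, hw1, hw2, mul_pow, ← C_pow, mul_mul_mul_comm, ← C_mul,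
          show ζ ^ 2 * ζ = ζ ^ 3 from by ring, hC1]
      · rw [map_mul, map_pow, hw1, hw2, mul_pow, ← C_pow, mul_mul_mul_comm, ← C_mul,
          show ζ * ζ ^ 2 = ζ ^ 3 from by ring, hC1]
    have := hgen hfA
    rw [AlgHom.mem_equalizer] at this
    simpa using this
end

section
/- Let a > 0 be a real number and let ζ := exp(2πi/3). Define f_a on (0,∞) with values in ℂ by f_a(u) = (a³+u³)^{1/3} + (a/3)·Σ_{j=0}^{2} ζʲ·Log( (1+u³/a³)^{1/3} − ζʲ ), where (·)^{1/3} denotes the real cube root of a positive real number and Log denotes the principal branch of the complex logarithm. Then for every u > 0, f_a is differentiable at u with derivative f_a'(u) = (1 + a³/u³)^{1/3}, a positive real number. -/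
/-- The global Kähler potential
`f_a(u) = (a³+u³)^{1/3} + (a/3)·Σ_{j=0}^{2} ζʲ·Log((1+u³/a³)^{1/3} − ζʲ)` of the generalized
Eguchi–Hanson metric satisfies `f_a'(u) = (1 + a³/u³)^{1/3}` for every `u > 0`, and this
derivative is a positive real number. Here `ζ = exp(2πi/3)`, `(·)^{1/3}` is the real cube
root of a positive real, and `Log` is the principal branch of the complex logarithm. -/
theorem eguchi_hanson_potential_deriv
    (a : ℝ) (ha : 0 < a)
    (ζ : ℂ) (hζ : ζ = Complex.exp (2 * (Real.pi : ℂ) * Complex.I / 3))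
    (f : ℝ → ℂ)
    (hf : ∀ u : ℝ,
      f u = (((a ^ 3 + u ^ 3) ^ ((1 : ℝ) / 3) : ℝ) : ℂ)
        + ((a : ℂ) / 3) * ∑ j ∈ Finset.range 3,
            ζ ^ j * Complex.log ((((1 + u ^ 3 / a ^ 3) ^ ((1 : ℝ) / 3) : ℝ) : ℂ) - ζ ^ j)) :
    ∀ u : ℝ, 0 < u →
      HasDerivAt f (((1 + a ^ 3 / u ^ 3) ^ ((1 : ℝ) / 3) : ℝ) : ℂ) u ∧
        0 < (1 + a ^ 3 / u ^ 3) ^ ((1 : ℝ) / 3) := by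
  -- facts about ζ
  have ha3 : (0:ℝ) < a ^ 3 := by positivity
  have hζim : ζ.im = Real.sin (2 * Real.pi / 3) := by
    rw [hζ, show 2 * (Real.pi:ℂ) * Complex.I / 3 = ((2 * Real.pi / 3 : ℝ) : ℂ) * Complex.I by
      push_cast; ring, Complex.exp_ofReal_mul_I_im]
  have hsin : 0 < Real.sin (2 * Real.pi / 3) :=
    Real.sin_pos_of_pos_of_lt_pi (by positivity) (by linarith [Real.pi_pos])
  have hζim0 : ζ.im ≠ 0 := by rw [hζim]; exact ne_of_gt hsin
  have hζ3 : ζ ^ 3 = 1 := by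
    rw [hζ, ← Complex.exp_nat_mul]
    rw [show (3:ℕ) * (2 * (Real.pi:ℂ) * Complex.I / 3) = 2 * (Real.pi:ℂ) * Complex.I by
      push_cast; ring]
    exact Complex.exp_two_pi_mul_I
  have hζ1 : ζ ≠ 1 := by
    intro h; rw [h] at hζim0; simp at hζim0
  have hsum : ζ ^ 2 + ζ + 1 = 0 := by
    have h : (ζ - 1) * (ζ ^ 2 + ζ + 1) = 0 := by linear_combination hζ3
    rcases mul_eq_zero.1 h with h | h
    · exact absurd (sub_eq_zero.1 h) hζ1
    · exact h
  intro u hu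
  have hu3 : (0:ℝ) < u ^ 3 := by positivity
  set x : ℝ := 1 + u ^ 3 / a ^ 3 with hxdef
  have hx : (0:ℝ) < x := by positivity
  have hx1 : (1:ℝ) < x := by
    have h : 0 < u ^ 3 / a ^ 3 := by positivity
    rw [hxdef]; linarith
  set v : ℝ := x ^ ((1:ℝ)/3) with hvdef
  have hv0 : 0 < v := Real.rpow_pos_of_pos hx _
  have hv1 : 1 < v := by
    rw [hvdef]
    exact (Real.one_lt_rpow_iff_of_pos hx).2 (Or.inl ⟨hx1, by norm_num⟩)
  have hv3 : v ^ 3 = x := by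
    rw [hvdef, ← Real.rpow_natCast (x ^ ((1:ℝ)/3)) 3, ← Real.rpow_mul hx.le]
    norm_num
  -- cube root identities
  have ha13 : (a ^ 3 : ℝ) ^ ((1:ℝ)/3) = a := by
    rw [← Real.rpow_natCast a 3, ← Real.rpow_mul ha.le]; norm_num
  have hg : (a ^ 3 + u ^ 3 : ℝ) ^ ((1:ℝ)/3) = a * v := by
    have h : a ^ 3 + u ^ 3 = a ^ 3 * x := by
      rw [hxdef, mul_add, mul_one, mul_div_cancel₀ _ ha3.ne']
    rw [h, Real.mul_rpow ha3.le hx.le, ha13]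
  have hT : (1 + a ^ 3 / u ^ 3 : ℝ) ^ ((1:ℝ)/3) = a / u * v := by
    have h : 1 + a ^ 3 / u ^ 3 = (a / u) ^ 3 * x := by
      rw [hxdef]; field_simp; ring
    rw [h, Real.mul_rpow (by positivity) hx.le, ← Real.rpow_natCast (a/u) 3,
      ← Real.rpow_mul (by positivity)]
    norm_num
    exact Or.inl hvdef.symm
  have hTpos : 0 < (1 + a ^ 3 / u ^ 3 : ℝ) ^ ((1:ℝ)/3) :=
    Real.rpow_pos_of_pos (by positivity) _
  refine ⟨?_, hTpos⟩
  -- derivative of S t = (1 + t^3/a^3)^(1/3)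
  have hinner : HasDerivAt (fun t : ℝ => 1 + t ^ 3 / a ^ 3) (3 * u ^ 2 / a ^ 3) u := by
    simpa using ((hasDerivAt_pow 3 u).div_const (a ^ 3)).const_add 1
  set sd : ℝ := (1:ℝ)/3 * x ^ ((1:ℝ)/3 - 1) * (3 * u ^ 2 / a ^ 3) with hsddef
  have hS : HasDerivAt (fun t : ℝ => (1 + t ^ 3 / a ^ 3) ^ ((1:ℝ)/3)) sd u := by
    have houter : HasDerivAt (fun y : ℝ => y ^ ((1:ℝ)/3))
        ((1:ℝ)/3 * x ^ ((1:ℝ)/3 - 1)) x :=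
      Real.hasDerivAt_rpow_const (Or.inl hx.ne')
    exact houter.comp u hinner
  -- relation sd * v^2 = u^2 / a^3
  have hsdv : sd * v ^ 2 = u ^ 2 / a ^ 3 := by
    have hv2 : v ^ 2 = x ^ ((2:ℝ)/3) := by
      rw [hvdef, ← Real.rpow_natCast (x ^ ((1:ℝ)/3)) 2, ← Real.rpow_mul hx.le]
      norm_num
    rw [hsddef, hv2,
      show (1:ℝ)/3 * x ^ ((1:ℝ)/3 - 1) * (3 * u ^ 2 / a ^ 3) * x ^ ((2:ℝ)/3)
        = x ^ ((1:ℝ)/3 - 1) * x ^ ((2:ℝ)/3) * (u ^ 2 / a ^ 3) by ring,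
      ← Real.rpow_add hx]
    norm_num
  -- complexify
  have hSC : HasDerivAt (fun t : ℝ => ((((1 + t ^ 3 / a ^ 3) ^ ((1:ℝ)/3) : ℝ)) : ℂ))
      (sd : ℂ) u := hS.ofReal_comp
  -- nonvanishing / slitPlane facts
  have hV1 : ((v:ℂ) - 1) ∈ Complex.slitPlane := by
    rw [Complex.mem_slitPlane_iff]; left; simp; linarith
  have hVζ : ((v:ℂ) - ζ) ∈ Complex.slitPlane := by
    rw [Complex.mem_slitPlane_iff]; right; simp [hζim0]
  have hζ2im : (ζ ^ 2).im ≠ 0 := by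
    have h2 : ζ ^ 2 = -1 - ζ := by linear_combination hsum
    rw [h2]; simp [hζim0]
  have hVζ2 : ((v:ℂ) - ζ ^ 2) ∈ Complex.slitPlane := by
    rw [Complex.mem_slitPlane_iff]; right; simp [hζ2im]
  -- derivative of each log term
  have h0 : HasDerivAt (fun t : ℝ =>
      Complex.log (((((1 + t ^ 3 / a ^ 3) ^ ((1:ℝ)/3) : ℝ)) : ℂ) - 1))
      ((sd:ℂ) / ((v:ℂ) - 1)) u := (hSC.sub_const 1).clog_real hV1
  have h1 : HasDerivAt (fun t : ℝ =>
      Complex.log (((((1 + t ^ 3 / a ^ 3) ^ ((1:ℝ)/3) : ℝ)) : ℂ) - ζ))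
      ((sd:ℂ) / ((v:ℂ) - ζ)) u := (hSC.sub_const ζ).clog_real hVζ
  have h2 : HasDerivAt (fun t : ℝ =>
      Complex.log (((((1 + t ^ 3 / a ^ 3) ^ ((1:ℝ)/3) : ℝ)) : ℂ) - ζ ^ 2))
      ((sd:ℂ) / ((v:ℂ) - ζ ^ 2)) u := (hSC.sub_const (ζ ^ 2)).clog_real hVζ2
  -- derivative of first term
  have hG : HasDerivAt (fun t : ℝ => (((a ^ 3 + t ^ 3) ^ ((1:ℝ)/3) : ℝ) : ℂ))
      ((a : ℂ) * sd) u := by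
    have hg1 : HasDerivAt (fun t : ℝ => ((a ^ 3 + t ^ 3) ^ ((1:ℝ)/3) : ℝ)) (a * sd) u := by
      have : (fun t : ℝ => ((a ^ 3 + t ^ 3) ^ ((1:ℝ)/3) : ℝ))
          = fun t : ℝ => a * ((1 + t ^ 3 / a ^ 3) ^ ((1:ℝ)/3)) := by
        funext t
        have h : a ^ 3 + t ^ 3 = a ^ 3 * (1 + t ^ 3 / a ^ 3) := by
          rw [mul_add, mul_one, mul_div_cancel₀ _ ha3.ne']
        rcases le_or_gt 0 (1 + t ^ 3 / a ^ 3) with h' | h'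
        · rw [h, Real.mul_rpow ha3.le h', ha13]
        · have hneg : a ^ 3 + t ^ 3 < 0 := by nlinarith
          rw [Real.rpow_def_of_neg hneg, Real.rpow_def_of_neg h', h,
            Real.log_mul ha3.ne' h'.ne, add_mul, Real.exp_add,
            show Real.log (a ^ 3) * ((1:ℝ)/3) = Real.log a by
              rw [Real.log_pow]; push_cast; ring,
            Real.exp_log ha]
          ring
      rw [this]
      exact hS.const_mul a
    simpa using hg1.ofReal_comp
  -- assemble
  have hfun : f = fun t : ℝ =>
      (((a ^ 3 + t ^ 3) ^ ((1:ℝ)/3) : ℝ) : ℂ)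
      + ((a:ℂ)/3) * (Complex.log (((((1 + t ^ 3 / a ^ 3) ^ ((1:ℝ)/3) : ℝ)) : ℂ) - 1)
        + (ζ * Complex.log (((((1 + t ^ 3 / a ^ 3) ^ ((1:ℝ)/3) : ℝ)) : ℂ) - ζ)
        + ζ ^ 2 * Complex.log (((((1 + t ^ 3 / a ^ 3) ^ ((1:ℝ)/3) : ℝ)) : ℂ) - ζ ^ 2))) := by
    funext t
    rw [hf t]
    simp [Finset.sum_range_succ]
    ring_nf
    try exact Or.inl trivial
  rw [hfun]
  have hD : HasDerivAt (fun t : ℝ =>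
      (((a ^ 3 + t ^ 3) ^ ((1:ℝ)/3) : ℝ) : ℂ)
      + ((a:ℂ)/3) * (Complex.log (((((1 + t ^ 3 / a ^ 3) ^ ((1:ℝ)/3) : ℝ)) : ℂ) - 1)
        + (ζ * Complex.log (((((1 + t ^ 3 / a ^ 3) ^ ((1:ℝ)/3) : ℝ)) : ℂ) - ζ)
        + ζ ^ 2 * Complex.log (((((1 + t ^ 3 / a ^ 3) ^ ((1:ℝ)/3) : ℝ)) : ℂ) - ζ ^ 2))))
      ((a:ℂ) * sd + ((a:ℂ)/3) * ((sd:ℂ) / ((v:ℂ) - 1)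
        + (ζ * ((sd:ℂ) / ((v:ℂ) - ζ)) + ζ ^ 2 * ((sd:ℂ) / ((v:ℂ) - ζ ^ 2))))) u :=
    hG.add ((h0.add ((h1.const_mul ζ).add (h2.const_mul (ζ ^ 2)))).const_mul ((a:ℂ)/3))
  have key : (a:ℂ) * sd + ((a:ℂ)/3) * ((sd:ℂ) / ((v:ℂ) - 1)
        + (ζ * ((sd:ℂ) / ((v:ℂ) - ζ)) + ζ ^ 2 * ((sd:ℂ) / ((v:ℂ) - ζ ^ 2))))
      = (((1 + a ^ 3 / u ^ 3 : ℝ) ^ ((1:ℝ)/3) : ℝ) : ℂ) := by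
    -- complex relations
    have hA : (a:ℂ) ≠ 0 := by exact_mod_cast ha.ne'
    have hU : (u:ℂ) ≠ 0 := by exact_mod_cast hu.ne'
    have hVne1 : (v:ℂ) - 1 ≠ 0 := Complex.slitPlane_ne_zero hV1
    have hVneζ : (v:ℂ) - ζ ≠ 0 := Complex.slitPlane_ne_zero hVζ
    have hVneζ2 : (v:ℂ) - ζ ^ 2 ≠ 0 := Complex.slitPlane_ne_zero hVζ2
    have hVC : (v:ℂ) ≠ 0 := by exact_mod_cast hv0.ne'
    have hR1 : (sd:ℂ) * (v:ℂ) ^ 2 = (u:ℂ) ^ 2 / (a:ℂ) ^ 3 := by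
      rw [← Complex.ofReal_pow, ← Complex.ofReal_mul, hsdv]; push_cast; ring
    have hR2 : (v:ℂ) ^ 3 = 1 + (u:ℂ) ^ 3 / (a:ℂ) ^ 3 := by
      have h := hv3
      rw [hxdef] at h
      rw [← Complex.ofReal_pow, h]; push_cast; ring
    have hR3 : (((1 + a ^ 3 / u ^ 3 : ℝ) ^ ((1:ℝ)/3) : ℝ) : ℂ) = (a:ℂ) / (u:ℂ) * (v:ℂ) := by
      rw [hT]; push_cast; ring
    rw [hR3]
    have hX : (sd:ℂ) / ((v:ℂ) - 1) + (ζ * ((sd:ℂ) / ((v:ℂ) - ζ)) + ζ ^ 2 * ((sd:ℂ) / ((v:ℂ) - ζ ^ 2)))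
        = 3 * (sd:ℂ) / ((v:ℂ) ^ 3 - 1) := by
      have hprod : ((v:ℂ) - 1) * ((v:ℂ) - ζ) * ((v:ℂ) - ζ ^ 2) = (v:ℂ) ^ 3 - 1 := by
        linear_combination (-(v:ℂ) ^ 2 + ζ * (v:ℂ)) * hsum - hζ3
      rw [← hprod]
      field_simp
      linear_combination (sd:ℂ) * ((v:ℂ) ^ 2 - 2 * ζ * (v:ℂ)) * hsum + 3 * (sd:ℂ) * hζ3
    have hv3m : (v:ℂ) ^ 3 - 1 = (u:ℂ) ^ 3 / (a:ℂ) ^ 3 := by rw [hR2]; ring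
    rw [hX, hv3m]
    have hsd : (sd:ℂ) = (u:ℂ) ^ 2 / ((a:ℂ) ^ 3 * (v:ℂ) ^ 2) := by
      rw [eq_div_iff (by positivity), ← mul_assoc, mul_comm (sd:ℂ), mul_assoc, hR1]
      field_simp
    rw [hsd]
    field_simp
    rw [hR2, mul_add, mul_one, mul_div_cancel₀ _ (pow_ne_zero 3 hA)]
    ring
  rw [← key]
  exact hD
end
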